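/- Let φ₁, …, φ_M : ℝ → ℂ be square-integrable functions supported on [-1,1], and define the matrix-valued function Φ(t) with entries Φᵢⱼ(t) = ∫ℝ conj(φᵢ(x)) φⱼ(x + t) dx. Then for any positive semidefinite Hermitian M × M matrix A, the function K_A(t) = trace(A · Φ(t)) is positive definite on ℝ. -/

import Mathlib

open MeasureTheory
open scoped ComplexOrder

private lemma sum_reorder4 {N₁ N₂ : Type*} [Fintype N₁] [Fintype N₂]
    (f : N₁ → N₁ → N₂ → N₂ → ℂ) :
    ∑ k : N₂, ∑ l : N₂, ∑ j : N₁, ∑ i : N₁, f i j k l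
      = ∑ i : N₁, ∑ j : N₁, ∑ k : N₂, ∑ l : N₂, f i j k l := by
  have h1 : ∑ p : N₂ × N₂ × N₁ × N₁, f p.2.2.2 p.2.2.1 p.1 p.2.1
      = ∑ k : N₂, ∑ l : N₂, ∑ j : N₁, ∑ i : N₁, f i j k l := by
    simp only [Fintype.sum_prod_type]
  have h2 : ∑ q : N₁ × N₁ × N₂ × N₂, f q.1 q.2.1 q.2.2.1 q.2.2.2
      = ∑ i : N₁, ∑ j : N₁, ∑ k : N₂, ∑ l : N₂, f i j k l := by
    simp only [Fintype.sum_prod_type]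
  rw [← h1, ← h2]
  exact Fintype.sum_equiv
    ⟨fun p => (p.2.2.2, p.2.2.1, p.1, p.2.1), fun q => (q.2.2.1, q.2.2.2, q.2.1, q.1),
      fun p => rfl, fun q => rfl⟩ _ _ (fun p => rfl)

theorem trace_kernel_posdef
    (M : ℕ) (φ : Fin M → ℝ → ℂ)
    (hφ : ∀ i, MemLp (φ i) 2 volume)
    (hsupp : ∀ i, ∀ x : ℝ, x ∉ Set.Icc (-1 : ℝ) 1 → φ i x = 0)
    (Φ : ℝ → Matrix (Fin M) (Fin M) ℂ)
    (hΦ : ∀ (t : ℝ) (i j : Fin M),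
      Φ t i j = ∫ x : ℝ, (starRingEnd ℂ) (φ i x) * φ j (x + t))
    (A : Matrix (Fin M) (Fin M) ℂ) (hA : A.PosSemidef) :
    ∀ (n : ℕ) (t : Fin n → ℝ) (c : Fin n → ℂ),
      0 ≤ ∑ i, ∑ j, (starRingEnd ℂ) (c i) * c j * (A * Φ (t j - t i)).trace := by
  intro n t c
  classical
  -- shifted functions are in L²
  have hshift : ∀ (k : Fin M) (a : ℝ), MemLp (fun y => φ k (y - a)) 2 volume := fun k a =>
    (hφ k).comp_measurePreserving (measurePreserving_sub_right volume a)
  have hconj : ∀ (k : Fin M) (a : ℝ),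
      MemLp (fun y => (starRingEnd ℂ) (φ k (y - a))) 2 volume := by
    intro k a
    refine MemLp.of_le (hshift k a) ?_ (Filter.Eventually.of_forall fun y => by simp)
    exact Complex.continuous_conj.comp_aestronglyMeasurable (hshift k a).1
  -- integrability of products
  have hint : ∀ (i j : Fin n) (k l : Fin M),
      Integrable (fun y => (starRingEnd ℂ) (φ l (y - t j)) * φ k (y - t i)) volume := by
    intro i j k l
    have h := (hshift k (t i)).smul (φ := fun y => (starRingEnd ℂ) (φ l (y - t j)))
      (hconj l (t j)) (p := 2) (q := 2) (r := 1)
      (hpqr := ⟨by rw [ENNReal.inv_two_add_inv_two, inv_one]⟩)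
    rw [memLp_one_iff_integrable] at h
    simpa [smul_eq_mul, Pi.mul_def] using h
  -- translation invariance
  have htrans : ∀ (i j : Fin n) (k l : Fin M),
      (∫ x : ℝ, (starRingEnd ℂ) (φ l x) * φ k (x + (t j - t i)))
        = ∫ y : ℝ, (starRingEnd ℂ) (φ l (y - t j)) * φ k (y - t i) := by
    intro i j k l
    have h := integral_sub_right_eq_self (μ := volume)
      (fun x : ℝ => (starRingEnd ℂ) (φ l x) * φ k (x + (t j - t i))) (t j)
    rw [← h]
    simp only [sub_add_sub_cancel]
  -- the combined functions
  set F : Fin M → ℝ → ℂ := fun k y => ∑ i, (starRingEnd ℂ) (c i) * φ k (y - t i) with hF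
  have hconjF : ∀ (l : Fin M) (y : ℝ),
      (starRingEnd ℂ) (F l y) = ∑ j, c j * (starRingEnd ℂ) (φ l (y - t j)) := by
    intro l y
    simp [hF, map_sum]
  -- the integrand, as a single-indexed family
  set g : Fin n → Fin n → Fin M → Fin M → ℝ → ℂ := fun i j k l y =>
    ((starRingEnd ℂ) (c i) * c j * A k l) *
      ((starRingEnd ℂ) (φ l (y - t j)) * φ k (y - t i)) with hg
  have hgint : ∀ (i : Fin n) (j : Fin n) (k : Fin M) (l : Fin M), Integrable (g i j k l) volume :=
    fun i j k l => (hint i j k l).const_mul _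
  -- pointwise identity
  have hpoint : ∀ y : ℝ,
      (∑ k, ∑ l, A k l * (starRingEnd ℂ) (F l y) * F k y)
        = ∑ p : Fin n × Fin n × Fin M × Fin M, g p.1 p.2.1 p.2.2.1 p.2.2.2 y := by
    intro y
    simp only [Fintype.sum_prod_type]
    rw [← sum_reorder4 (fun i j k l => g i j k l y)]
    refine Finset.sum_congr rfl fun k _ => Finset.sum_congr rfl fun l _ => ?_
    rw [hconjF]
    simp only [hF, hg, Finset.mul_sum, Finset.sum_mul]
    rw [Finset.sum_comm]
    refine Finset.sum_congr rfl fun j _ => Finset.sum_congr rfl fun i _ => ?_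
    ring
  -- key rewriting of the double sum as one integral
  have key : ∑ i, ∑ j, (starRingEnd ℂ) (c i) * c j * (A * Φ (t j - t i)).trace
      = ∫ y : ℝ, ∑ k, ∑ l, A k l * (starRingEnd ℂ) (F l y) * F k y := by
    have hLHS : ∀ (i j : Fin n),
        (starRingEnd ℂ) (c i) * c j * (A * Φ (t j - t i)).trace
          = ∑ k, ∑ l, ∫ y : ℝ, g i j k l y := by
      intro i j
      rw [Matrix.trace]
      simp only [Matrix.diag, Matrix.mul_apply, Finset.mul_sum]
      refine Finset.sum_congr rfl fun k _ => Finset.sum_congr rfl fun l _ => ?_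
      rw [hΦ, htrans i j k l, hg]
      rw [MeasureTheory.integral_const_mul]
      ring
    calc ∑ i, ∑ j, (starRingEnd ℂ) (c i) * c j * (A * Φ (t j - t i)).trace
        = ∑ i, ∑ j, ∑ k, ∑ l, ∫ y : ℝ, g i j k l y := by
          exact Finset.sum_congr rfl fun i _ => Finset.sum_congr rfl fun j _ => hLHS i j
      _ = ∑ p : Fin n × Fin n × Fin M × Fin M, ∫ y : ℝ, g p.1 p.2.1 p.2.2.1 p.2.2.2 y := by
          simp only [Fintype.sum_prod_type]
      _ = ∫ y : ℝ, ∑ p : Fin n × Fin n × Fin M × Fin M, g p.1 p.2.1 p.2.2.1 p.2.2.2 y := by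
          rw [MeasureTheory.integral_finset_sum]
          exact fun p _ => hgint p.1 p.2.1 p.2.2.1 p.2.2.2
      _ = ∫ y : ℝ, ∑ k, ∑ l, A k l * (starRingEnd ℂ) (F l y) * F k y := by
          refine integral_congr_ae (Filter.Eventually.of_forall fun y => ?_)
          exact (hpoint y).symm
  rw [key]
  -- pointwise nonnegativity
  have hpt : ∀ y : ℝ, 0 ≤ ∑ k, ∑ l, A k l * (starRingEnd ℂ) (F l y) * F k y := by
    intro y
    have h := (Matrix.posSemidef_iff_dotProduct_mulVec.mp hA).2 (fun k => (starRingEnd ℂ) (F k y))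
    have heq : dotProduct (star fun k => (starRingEnd ℂ) (F k y))
        (A.mulVec fun k => (starRingEnd ℂ) (F k y))
          = ∑ k, ∑ l, A k l * (starRingEnd ℂ) (F l y) * F k y := by
      simp only [dotProduct, Matrix.mulVec, Pi.star_apply, RCLike.star_def,
        Complex.conj_conj, Finset.mul_sum]
      refine Finset.sum_congr rfl fun k _ => Finset.sum_congr rfl fun l _ => ?_
      ring
    rw [heq] at h
    exact h
  -- integral of a pointwise nonnegative function is nonnegative
  set H : ℝ → ℂ := fun y => ∑ k, ∑ l, A k l * (starRingEnd ℂ) (F l y) * F k y with hH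
  have hHre : ∀ y, H y = ((H y).re : ℂ) := by
    intro y
    have h := (Complex.nonneg_iff).mp (hpt y)
    exact Complex.ext rfl (by rw [Complex.ofReal_im]; exact h.2.symm)
  calc (0 : ℂ) = Complex.ofReal 0 := by norm_num
    _ ≤ Complex.ofReal (∫ y : ℝ, (H y).re) := by
        rw [Complex.real_le_real]
        exact integral_nonneg fun y => ((Complex.nonneg_iff).mp (hpt y)).1
    _ = ∫ y : ℝ, ((H y).re : ℂ) := (integral_ofReal).symm
    _ = ∫ y : ℝ, H y := by
        refine integral_congr_ae (Filter.Eventually.of_forall fun y => (hHre y).symm)
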